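/- Let n ≥ 1 and let z : Fin n → ℝ be a vector of logits. For a temperature T > 0 define the tempered softmax q_T(i) := exp(z i / T) / Σ_{j} exp(z j / T). Then the maximal class probability is monotone nonincreasing in the temperature: for all 0 < T ≤ T', (⨆ i, q_{T'}(i)) ≤ (⨆ i, q_T(i)). -/

import Mathlib

/-- The tempered softmax with logits `z` and temperature `T`:
`q_T(i) = exp(z i / T) / Σ_j exp(z j / T)`. -/
noncomputable def temperedSoftmax {n : ℕ} (z : Fin n → ℝ) (T : ℝ) (i : Fin n) : ℝ :=
  Real.exp (z i / T) / ∑ j, Real.exp (z j / T)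

lemma temperedSoftmax_argmax_eq {n : ℕ} (z : Fin n → ℝ) (T : ℝ) (hT : 0 < T)
    (m : Fin n) :
    temperedSoftmax z T m = (∑ j, Real.exp ((z j - z m) / T))⁻¹ := by
  have hkey : ∑ j, Real.exp (z j / T)
      = Real.exp (z m / T) * ∑ j, Real.exp ((z j - z m) / T) := by
    rw [Finset.mul_sum]
    refine Finset.sum_congr rfl fun j _ => ?_
    rw [← Real.exp_add]
    congr 1
    field_simp
    ring
  rw [temperedSoftmax, hkey, div_mul_eq_div_div,
    div_self (Real.exp_ne_zero _), one_div]

/-- The maximal class probability of the tempered softmax is monotone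
nonincreasing in the temperature: for `0 < T ≤ T'`,
`⨆ i, q_{T'}(i) ≤ ⨆ i, q_T(i)`. -/
theorem temperedSoftmax_max_antitone {n : ℕ} (hn : 1 ≤ n) (z : Fin n → ℝ)
    (T T' : ℝ) (hT : 0 < T) (hTT' : T ≤ T') :
    (⨆ i, temperedSoftmax z T' i) ≤ ⨆ i, temperedSoftmax z T i := by
  have hT' : 0 < T' := hT.trans_le hTT'
  haveI : Nonempty (Fin n) := ⟨⟨0, hn⟩⟩
  obtain ⟨m, hm⟩ := Finite.exists_max z
  have hsumpos : ∀ S : ℝ, 0 < S → (0:ℝ) < ∑ j, Real.exp (z j / S) := fun S _ =>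
    Finset.sum_pos (fun j _ => Real.exp_pos _) Finset.univ_nonempty
  have step1 : ∀ i, temperedSoftmax z T' i ≤ temperedSoftmax z T' m := by
    intro i
    unfold temperedSoftmax
    gcongr
    exact hm i
  have step2 : temperedSoftmax z T' m ≤ temperedSoftmax z T m := by
    rw [temperedSoftmax_argmax_eq z T hT m, temperedSoftmax_argmax_eq z T' hT' m]
    apply inv_anti₀
    · exact Finset.sum_pos (fun j _ => Real.exp_pos _) Finset.univ_nonempty
    · refine Finset.sum_le_sum fun j _ => Real.exp_le_exp.2 ?_
      have hnp : z j - z m ≤ 0 := sub_nonpos.2 (hm j)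
      rw [div_eq_mul_inv, div_eq_mul_inv]
      exact mul_le_mul_of_nonpos_left (inv_anti₀ hT hTT') hnp
  refine ciSup_le fun i => ?_
  exact ((step1 i).trans step2).trans (le_ciSup (Set.Finite.bddAbove
    (Set.finite_range _)) m)
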